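/- The Traveler's Dilemma is almost strictly competitive: the pure strategy profile (2,2) is the unique Nash equilibrium of the Traveler's Dilemma (in mixed strategies), with payoffs α = β = 2; (2,2) is a saddle point, i.e. α(x,e_2) ≤ α(e_2,e_2) ≤ α(e_2,y) and β(e_2,y) ≤ β(e_2,e_2) ≤ β(x,e_2) for all x ∈ X, y ∈ Y; and every twisted equilibrium of the Traveler's Dilemma also yields payoffs α = β = 2 to the two players. -/
import Mathlib


open Matrix

noncomputable section

/-- The set of mixed strategies: the standard simplex in `ℝ^m`. -/
def Simp (m : ℕ) : Set (Fin m → ℝ) := stdSimplex ℝ (Fin m)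

/-- Bilinear payoff `xᵀ A y`. -/
def pay {m n : ℕ} (A : Matrix (Fin m) (Fin n) ℝ) (x : Fin m → ℝ) (y : Fin n → ℝ) : ℝ :=
  x ⬝ᵥ A.mulVec y

/-- Payoff of a mixed strategy `x` against the pure strategy `j`: `α(x, e_j) = (xᵀA)_j`. -/
def purePay {m n : ℕ} (A : Matrix (Fin m) (Fin n) ℝ) (x : Fin m → ℝ) (j : Fin n) : ℝ :=
  Matrix.vecMul x A j

/-- Pure best replies of player II against `x`. -/
def BRII {m n : ℕ} (B : Matrix (Fin m) (Fin n) ℝ) (x : Fin m → ℝ) : Set (Fin n) :=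
  {j | ∀ k, purePay B x k ≤ purePay B x j}

/-- Best-reply region `X(j)` of column `j`. -/
def XReg {m n : ℕ} (B : Matrix (Fin m) (Fin n) ℝ) (j : Fin n) : Set (Fin m → ℝ) :=
  {x ∈ Simp m | j ∈ BRII B x}

/-- `D`: columns whose best-reply region has a fully mixed point. -/
def Dset {m n : ℕ} (B : Matrix (Fin m) (Fin n) ℝ) : Set (Fin n) :=
  {j | ∃ x ∈ XReg B j, ∀ i, 0 < x i}

/-- `E(j)`: columns of `B` payoff-equivalent to column `j`. -/
def Ecols {m n : ℕ} (B : Matrix (Fin m) (Fin n) ℝ) (j : Fin n) : Set (Fin n) :=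
  {k | ∀ i, B i k = B i j}

/-- `min_j α(x, e_j)`. -/
def minPure {m n : ℕ} (A : Matrix (Fin m) (Fin n) ℝ) (x : Fin m → ℝ) : ℝ :=
  sInf {w | ∃ j, w = purePay A x j}

/-- `max_j α(x, e_j)`. -/
def maxPure {m n : ℕ} (A : Matrix (Fin m) (Fin n) ℝ) (x : Fin m → ℝ) : ℝ :=
  sSup {w | ∃ j, w = purePay A x j}

/-- `max_{j ∈ BR_II(x)} α(x, e_j)`. -/
def maxBR {m n : ℕ} (A B : Matrix (Fin m) (Fin n) ℝ) (x : Fin m → ℝ) : ℝ :=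
  sSup {w | ∃ j ∈ BRII B x, w = purePay A x j}

/-- Matrix game value `v_A = max_{x ∈ X} min_j α(x, e_j)`. -/
def matVal {m n : ℕ} (A : Matrix (Fin m) (Fin n) ℝ) : ℝ :=
  sSup {v | ∃ x ∈ Simp m, v = minPure A x}

/-- `min_{k ∈ E(j)} α(x, e_k)`. -/
def minE {m n : ℕ} (A B : Matrix (Fin m) (Fin n) ℝ) (j : Fin n) (x : Fin m → ℝ) : ℝ :=
  sInf {w | ∃ k ∈ Ecols B j, w = purePay A x k}

/-- Commitment value `α^L = max_{j∈D} max_{x∈X(j)} min_{k∈E(j)} α(x,e_k)`. -/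
def alphaL {m n : ℕ} (A B : Matrix (Fin m) (Fin n) ℝ) : ℝ :=
  sSup {v | ∃ j ∈ Dset B, ∃ x ∈ XReg B j, v = minE A B j x}

/-- Highest leader payoff `α^H = max_{j : X(j)≠∅} max_{x∈X(j)} α(x,e_j)`. -/
def alphaH {m n : ℕ} (A B : Matrix (Fin m) (Fin n) ℝ) : ℝ :=
  sSup {v | ∃ j, ∃ x ∈ XReg B j, v = purePay A x j}

/-- Commitment optimal strategies of the leader (player I). -/
def XLset {m n : ℕ} (A B : Matrix (Fin m) (Fin n) ℝ) : Set (Fin m → ℝ) :=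
  {x | ∃ j ∈ Dset B, x ∈ XReg B j ∧ minE A B j x = alphaL A B}

/-- Non-degeneracy for player I: no mixed strategy of player I has more pure best
replies (among player II's pure strategies) than the size of its support. -/
def NondegFor {m n : ℕ} (B : Matrix (Fin m) (Fin n) ℝ) : Prop :=
  ∀ x ∈ Simp m, (BRII B x).ncard ≤ {i | x i ≠ 0}.ncard

/-- Nash equilibrium of the bimatrix game `(A,B)`. -/
def isNE {m n : ℕ} (A B : Matrix (Fin m) (Fin n) ℝ) (x : Fin m → ℝ) (y : Fin n → ℝ) : Prop :=
  x ∈ Simp m ∧ y ∈ Simp n ∧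
  (∀ x' ∈ Simp m, pay A x' y ≤ pay A x y) ∧
  (∀ y' ∈ Simp n, pay B x y' ≤ pay B x y)

/-- Strategies of player I appearing in some Nash equilibrium. -/
def NEX {m n : ℕ} (A B : Matrix (Fin m) (Fin n) ℝ) : Set (Fin m → ℝ) :=
  {x | ∃ y, isNE A B x y}

/-- Strategies of player II appearing in some Nash equilibrium. -/
def NEY {m n : ℕ} (A B : Matrix (Fin m) (Fin n) ℝ) : Set (Fin n → ℝ) :=
  {y | ∃ x, isNE A B x y}

/-- Weakly unilaterally competitive bimatrix game. -/
def WUC {m n : ℕ} (A B : Matrix (Fin m) (Fin n) ℝ) : Prop :=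
  (∀ x₁ ∈ Simp m, ∀ x₂ ∈ Simp m, ∀ y ∈ Simp n,
    (pay A x₁ y > pay A x₂ y → pay B x₁ y ≤ pay B x₂ y) ∧
    (pay A x₁ y = pay A x₂ y → pay B x₁ y = pay B x₂ y)) ∧
  (∀ y₁ ∈ Simp n, ∀ y₂ ∈ Simp n, ∀ x ∈ Simp m,
    (pay B x y₁ > pay B x y₂ → pay A x y₁ ≤ pay A x y₂) ∧
    (pay B x y₁ = pay B x y₂ → pay A x y₁ = pay A x y₂))

/-- Traveler's Dilemma payoff of the row player choosing `i` against `j`,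
for `i, j ∈ {2,…,100}`. -/
def trdPay (i j : ℕ) : ℝ :=
  if i < j then (i : ℝ) + 2 else if i = j then (i : ℝ) else (j : ℝ) - 2

/-- Player I's payoff matrix in the Traveler's Dilemma; strategy `i : Fin 99`
represents the claim `i + 2 ∈ {2,…,100}`. -/
def TrA : Matrix (Fin 99) (Fin 99) ℝ :=
  Matrix.of fun i j => trdPay (i.val + 2) (j.val + 2)

/-- Player II's payoff matrix in the Traveler's Dilemma. -/
def TrB : Matrix (Fin 99) (Fin 99) ℝ :=
  Matrix.of fun i j => trdPay (j.val + 2) (i.val + 2)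

/-- The pure strategy `2` (index `0`) in the Traveler's Dilemma. -/
def trdTwo : Fin 99 → ℝ := Pi.single (⟨0, by norm_num⟩ : Fin 99) (1 : ℝ)

namespace TrdAux

/-- index of claim 2 -/
def z : Fin 99 := ⟨0, by norm_num⟩

lemma trdTwo_def : trdTwo = Pi.single z 1 := rfl

lemma TrA_lt {i j : Fin 99} (h : (i : ℕ) < j) : TrA i j = (i : ℝ) + 4 := by
  have h' : i.val + 2 < j.val + 2 := by omega
  simp only [TrA, Matrix.of_apply, trdPay, if_pos h']
  push_cast; ring

lemma TrA_self (i : Fin 99) : TrA i i = (i : ℝ) + 2 := by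
  simp only [TrA, Matrix.of_apply, trdPay, lt_irrefl, if_false, if_pos rfl]
  push_cast; ring

lemma TrA_gt {i j : Fin 99} (h : (j : ℕ) < i) : TrA i j = (j : ℝ) := by
  have h1 : ¬ (i.val + 2 < j.val + 2) := by omega
  have h2 : ¬ (i.val + 2 = j.val + 2) := by omega
  simp only [TrA, Matrix.of_apply, trdPay, if_neg h1, if_neg h2]
  push_cast; ring

lemma TrB_eq : TrB = TrAᵀ := rfl

lemma mem_simp {n : ℕ} {x : Fin n → ℝ} :
    x ∈ Simp n ↔ (∀ i, 0 ≤ x i) ∧ ∑ i, x i = 1 := Iff.rfl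

lemma single_mem {n : ℕ} (i : Fin n) : Pi.single i (1 : ℝ) ∈ Simp n := by
  refine ⟨fun j => ?_, ?_⟩
  · rcases eq_or_ne j i with rfl | h
    · simp
    · simp [Pi.single_apply, h]
  · simp [Pi.single_apply]

lemma two_mem : trdTwo ∈ Simp 99 := by
  rw [trdTwo_def]; exact single_mem z

/-- every pure strategy in the support of `x` is a best response -/
lemma supp_br {n : ℕ} {x w : Fin n → ℝ} (hx0 : ∀ i, 0 ≤ x i) (hx1 : ∑ i, x i = 1)
    (hle : ∀ i, w i ≤ x ⬝ᵥ w) {k : Fin n} (hk : x k ≠ 0) (i : Fin n) : w i ≤ w k := by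
  have hkpos : 0 < x k := (hx0 k).lt_of_ne (Ne.symm hk)
  have hwk : x ⬝ᵥ w ≤ w k := by
    by_contra hlt
    push_neg at hlt
    have hs : ∑ j, x j * w j < ∑ j, x j * (x ⬝ᵥ w) := by
      refine Finset.sum_lt_sum (fun j _ => mul_le_mul_of_nonneg_left (hle j) (hx0 j))
        ⟨k, Finset.mem_univ k, mul_lt_mul_of_pos_left hlt hkpos⟩
    rw [← Finset.sum_mul, hx1, one_mul] at hs
    simp only [dotProduct] at hs
    exact lt_irrefl _ hs
  exact (hle i).trans hwk

lemma mulVec_apply {n : ℕ} (A : Matrix (Fin n) (Fin n) ℝ) (b : Fin n → ℝ) (i : Fin n) :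
    A.mulVec b i = ∑ j, A i j * b j := rfl

lemma exists_supp {n : ℕ} {x : Fin n → ℝ} (hx1 : ∑ i, x i = 1) : ∃ i, x i ≠ 0 := by
  by_contra h
  push_neg at h
  simp [h] at hx1

lemma to_single {x : Fin 99 → ℝ} (hx1 : ∑ i, x i = 1)
    (h : ∀ j, j ≠ z → x j = 0) : x = trdTwo := by
  have hz : x z = 1 := by
    rw [← hx1]
    exact (Finset.sum_eq_single z (fun b _ hb => h b hb)
      (fun hz => absurd (Finset.mem_univ z) hz)).symm
  funext j
  rcases eq_or_ne j z with rfl | hj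
  · simp [trdTwo_def, hz]
  · simp [trdTwo_def, Pi.single_apply, hj, h j hj]

lemma sum_lt_aux {b : Fin 99 → ℝ} (hb0 : ∀ j, 0 ≤ b j) {m k : Fin 99}
    (hentry : ∀ j, b j ≠ 0 → TrA m j ≤ TrA k j) {j₁ : Fin 99} (hj₁ : b j₁ ≠ 0)
    (hstrict : TrA m j₁ < TrA k j₁) :
    TrA.mulVec b m < TrA.mulVec b k := by
  rw [mulVec_apply, mulVec_apply]
  refine Finset.sum_lt_sum (fun j _ => ?_)
    ⟨j₁, Finset.mem_univ _, mul_lt_mul_of_pos_right hstrict ((hb0 j₁).lt_of_ne (Ne.symm hj₁))⟩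
  by_cases h : b j = 0
  · simp [h]
  · exact mul_le_mul_of_nonneg_right (hentry j h) (hb0 j)

/-- Core lemma: a claim above 2 that is at least the maximum of the support of the
opponent's strategy `b` is not a best response against `b`. -/
lemma exists_better {b : Fin 99 → ℝ} (hb0 : ∀ j, 0 ≤ b j) (hb1 : ∑ j, b j = 1)
    {m : Fin 99} (hm : 1 ≤ (m : ℕ)) (hsupp : ∀ j, b j ≠ 0 → (j : ℕ) ≤ m) :
    ∃ k, TrA.mulVec b m < TrA.mulVec b k := by
  have hm99 : (m : ℕ) < 99 := m.isLt
  set m' : Fin 99 := ⟨m.val - 1, by omega⟩ with hm'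
  have hm'v : (m' : ℕ) = m.val - 1 := rfl
  by_cases hc : b m ≠ 0 ∨ b m' ≠ 0
  · -- compare claim m against claim m-1
    have hentry : ∀ j, b j ≠ 0 → TrA m j ≤ TrA m' j := by
      intro j hj
      have hjm : (j : ℕ) ≤ m := hsupp j hj
      rcases lt_trichotomy (j : ℕ) (m' : ℕ) with h1 | h1 | h1
      · rw [TrA_gt (by omega : (j:ℕ) < m), TrA_gt h1]
      · have hjm' : j = m' := Fin.ext h1
        subst hjm'
        rw [TrA_gt (by omega : ((m':Fin 99):ℕ) < m), TrA_self]
        linarith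
      · have hjmeq : j = m := Fin.ext (by omega)
        subst hjmeq
        rw [TrA_self, TrA_lt (by omega : (m':ℕ) < j)]
        have : ((m' : ℕ) : ℝ) = ((j : ℕ) : ℝ) - 1 := by
          rw [hm'v, Nat.cast_sub (by omega : 1 ≤ (j:ℕ))]; norm_num
        rw [this]; linarith
    rcases hc with h | h
    · refine ⟨m', sum_lt_aux hb0 hentry h ?_⟩
      rw [TrA_self, TrA_lt (by omega : (m':ℕ) < m)]
      have : ((m' : ℕ) : ℝ) = ((m : ℕ) : ℝ) - 1 := by
        rw [hm'v, Nat.cast_sub (by omega : 1 ≤ (m:ℕ))]; norm_num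
      rw [this]; linarith
    · refine ⟨m', sum_lt_aux hb0 hentry h ?_⟩
      rw [TrA_gt (by omega : (m':ℕ) < m), TrA_self]
      linarith
  · push_neg at hc
    obtain ⟨hbm, hbm'⟩ := hc
    obtain ⟨j₀', hj₀'⟩ := exists_supp hb1
    set S : Finset (Fin 99) := Finset.univ.filter (fun j => b j ≠ 0) with hS
    have hne : S.Nonempty := ⟨j₀', by simp [hS, hj₀']⟩
    set j₀ : Fin 99 := S.max' hne with hj₀def
    have hj₀mem : b j₀ ≠ 0 := by
      have := S.max'_mem hne
      simp [hS] at this; exact this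
    have hj₀max : ∀ j, b j ≠ 0 → j ≤ j₀ := fun j hj => S.le_max' j (by simp [hS, hj])
    have hj₀m : (j₀ : ℕ) < m := by
      have h1 := hsupp j₀ hj₀mem
      have h2 : j₀ ≠ m := fun h => hj₀mem (h ▸ hbm)
      exact lt_of_le_of_ne h1 (fun h => h2 (Fin.ext h))
    refine ⟨j₀, sum_lt_aux hb0 (fun j hj => ?_) hj₀mem ?_⟩
    · have hjj₀ : (j : ℕ) ≤ j₀ := hj₀max j hj
      rcases lt_or_eq_of_le hjj₀ with h1 | h1
      · rw [TrA_gt (by omega : (j:ℕ) < m), TrA_gt h1]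
      · have : j = j₀ := Fin.ext h1
        subst this
        rw [TrA_gt hj₀m, TrA_self]
        linarith
    · rw [TrA_gt hj₀m, TrA_self]
      linarith

lemma ne_conds {x y : Fin 99 → ℝ} (h : isNE TrA TrB x y) :
    (∀ k, x k ≠ 0 → ∀ i, TrA.mulVec y i ≤ TrA.mulVec y k) ∧
    (∀ k, y k ≠ 0 → ∀ j, TrA.mulVec x j ≤ TrA.mulVec x k) := by
  obtain ⟨hx, hy, hA, hB⟩ := h
  obtain ⟨hx0, hx1⟩ := hx
  obtain ⟨hy0, hy1⟩ := hy
  constructor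
  · intro k hk i
    refine supp_br hx0 hx1 (fun i' => ?_) hk i
    have := hA (Pi.single i' 1) (single_mem i')
    simpa [pay, single_dotProduct] using this
  · intro k hk j
    have hprw : ∀ y' : Fin 99 → ℝ, pay TrB x y' = y' ⬝ᵥ TrA.mulVec x := by
      intro y'
      rw [pay, Matrix.dotProduct_mulVec, TrB_eq, Matrix.vecMul_transpose,
        dotProduct_comm]
    refine supp_br hy0 hy1 (fun j' => ?_) hk j
    have := hB (Pi.single j' 1) (single_mem j')
    rw [hprw, hprw] at this
    simpa [single_dotProduct] using this

lemma ne_unique {x y : Fin 99 → ℝ} (hx : x ∈ Simp 99) (hy : y ∈ Simp 99)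
    (hcx : ∀ k, x k ≠ 0 → ∀ i, TrA.mulVec y i ≤ TrA.mulVec y k)
    (hcy : ∀ k, y k ≠ 0 → ∀ i, TrA.mulVec x i ≤ TrA.mulVec x k) :
    x = trdTwo ∧ y = trdTwo := by
  obtain ⟨hx0, hx1⟩ := hx
  obtain ⟨hy0, hy1⟩ := hy
  set S : Finset (Fin 99) := Finset.univ.filter (fun i => x i ≠ 0 ∨ y i ≠ 0) with hS
  obtain ⟨i₀, hi₀⟩ := exists_supp hx1
  have hne : S.Nonempty := ⟨i₀, by simp [hS, hi₀]⟩
  set m : Fin 99 := S.max' hne with hm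
  have hmem := S.max'_mem hne
  have hsx : ∀ j, x j ≠ 0 → (j : ℕ) ≤ m := fun j hj => S.le_max' j (by simp [hS, hj])
  have hsy : ∀ j, y j ≠ 0 → (j : ℕ) ≤ m := fun j hj => S.le_max' j (by simp [hS, hj])
  have hm0 : (m : ℕ) = 0 := by
    by_contra hm1
    have hm1 : 1 ≤ (m : ℕ) := by omega
    simp only [hS, Finset.mem_filter, Finset.mem_univ, true_and] at hmem
    rcases hmem with hxm | hym
    · obtain ⟨k, hk⟩ := exists_better hy0 hy1 hm1 hsy
      exact absurd (hcx m hxm k) (not_le.mpr hk)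
    · obtain ⟨k, hk⟩ := exists_better hx0 hx1 hm1 hsx
      exact absurd (hcy m hym k) (not_le.mpr hk)
  have hxz : ∀ j, j ≠ z → x j = 0 := by
    intro j hj
    by_contra hxj
    exact hj (Fin.ext (by have := hsx j hxj; have hzv : (z:ℕ) = 0 := rfl; omega))
  have hyz : ∀ j, j ≠ z → y j = 0 := by
    intro j hj
    by_contra hyj
    exact hj (Fin.ext (by have := hsy j hyj; have hzv : (z:ℕ) = 0 := rfl; omega))
  exact ⟨to_single hx1 hxz, to_single hy1 hyz⟩

/-- in the twisted game, claim 2 strictly dominates -/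
lemma key_dom (a : Fin 99) {b : Fin 99} (hb : 1 ≤ (b : ℕ)) : TrA a z + 1 ≤ TrA a b := by
  have hz : (z : ℕ) = 0 := rfl
  rcases Nat.eq_zero_or_pos (a : ℕ) with ha | ha
  · have haz : a = z := Fin.ext (by omega)
    subst haz
    rw [TrA_self, TrA_lt (by omega : (z:ℕ) < b)]
    linarith
  · rw [TrA_gt (by omega : (z:ℕ) < a)]
    have hz' : ((z : ℕ) : ℝ) = 0 := by rw [hz]; norm_num
    rw [hz']
    have hb' : (1:ℝ) ≤ ((b:ℕ) : ℝ) := by exact_mod_cast hb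
    have ha' : (0:ℝ) ≤ ((a:ℕ) : ℝ) := Nat.cast_nonneg _
    rcases lt_trichotomy (a : ℕ) (b : ℕ) with h | h | h
    · rw [TrA_lt h]; linarith
    · rw [Fin.ext h, TrA_self]; linarith
    · rw [TrA_gt h]; linarith

lemma twisted_unique {x y : Fin 99 → ℝ} (h : isNE (-TrB) (-TrA) x y) :
    x = trdTwo ∧ y = trdTwo := by
  obtain ⟨hx, hy, hA, hB⟩ := h
  obtain ⟨hx0, hx1⟩ := hx
  obtain ⟨hy0, hy1⟩ := hy
  constructor
  · -- player I side: w i = -(∑_j TrA j i * y j)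
    set w : Fin 99 → ℝ := (-TrB).mulVec y with hw
    have hbr : ∀ k, x k ≠ 0 → ∀ i, w i ≤ w k := by
      intro k hk i
      refine supp_br hx0 hx1 (fun i' => ?_) hk i
      have := hA (Pi.single i' 1) (single_mem i')
      simpa [pay, single_dotProduct] using this
    refine to_single hx1 (fun k hk => ?_)
    by_contra hxk
    have hk1 : 1 ≤ (k : ℕ) := by
      rcases Nat.eq_zero_or_pos (k : ℕ) with h0 | h0
      · exact absurd (Fin.ext h0 : k = z) hk
      · omega
    have hdom : w k < w z := by
      have hwe : ∀ i, w i = -∑ j, TrA j i * y j := by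
        intro i
        rw [hw, Matrix.neg_mulVec]
        simp only [Pi.neg_apply, mulVec_apply]
        rfl
      rw [hwe k, hwe z, neg_lt_neg_iff]
      have : ∑ j, (TrA j z + 1) * y j ≤ ∑ j, TrA j k * y j :=
        Finset.sum_le_sum (fun j _ => mul_le_mul_of_nonneg_right (key_dom j hk1) (hy0 j))
      have hsplit : ∑ j, (TrA j z + 1) * y j = (∑ j, TrA j z * y j) + ∑ j, y j := by
        rw [← Finset.sum_add_distrib]
        exact Finset.sum_congr rfl (fun j _ => by ring)
      rw [hy1] at hsplit
      linarith
    exact absurd (hbr k hxk z) (not_le.mpr hdom)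
  · -- player II side
    set w : Fin 99 → ℝ := Matrix.vecMul x (-TrA) with hw
    have hprw : ∀ y' : Fin 99 → ℝ, pay (-TrA) x y' = y' ⬝ᵥ w := by
      intro y'
      rw [pay, Matrix.dotProduct_mulVec, dotProduct_comm, hw]
    have hbr : ∀ k, y k ≠ 0 → ∀ j, w j ≤ w k := by
      intro k hk j
      refine supp_br hy0 hy1 (fun j' => ?_) hk j
      have := hB (Pi.single j' 1) (single_mem j')
      rw [hprw, hprw] at this
      simpa [single_dotProduct] using this
    refine to_single hy1 (fun k hk => ?_)
    by_contra hyk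
    have hk1 : 1 ≤ (k : ℕ) := by
      rcases Nat.eq_zero_or_pos (k : ℕ) with h0 | h0
      · exact absurd (Fin.ext h0 : k = z) hk
      · omega
    have hdom : w k < w z := by
      have hwe : ∀ j, w j = -∑ i, TrA i j * x i := by
        intro j
        rw [hw, Matrix.vecMul_neg]
        simp only [Pi.neg_apply, Matrix.vecMul, dotProduct]
        congr 1
        exact Finset.sum_congr rfl (fun i _ => mul_comm _ _)
      rw [hwe k, hwe z, neg_lt_neg_iff]
      have : ∑ i, (TrA i z + 1) * x i ≤ ∑ i, TrA i k * x i :=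
        Finset.sum_le_sum (fun i _ => mul_le_mul_of_nonneg_right (key_dom i hk1) (hx0 i))
      have hsplit : ∑ i, (TrA i z + 1) * x i = (∑ i, TrA i z * x i) + ∑ i, x i := by
        rw [← Finset.sum_add_distrib]
        exact Finset.sum_congr rfl (fun i _ => by ring)
      rw [hx1] at hsplit
      linarith
    exact absurd (hbr k hyk z) (not_le.mpr hdom)

lemma zcast : ((z : ℕ) : ℝ) = 0 := by norm_num [z]

lemma pay_two_right (A : Matrix (Fin 99) (Fin 99) ℝ) (x : Fin 99 → ℝ) :
    pay A x trdTwo = ∑ i, x i * A i z := by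
  rw [trdTwo_def, pay, Matrix.mulVec_single]
  simp [dotProduct]

lemma pay_two_left (A : Matrix (Fin 99) (Fin 99) ℝ) (y : Fin 99 → ℝ) :
    pay A trdTwo y = ∑ j, A z j * y j := by
  rw [trdTwo_def, pay, single_dotProduct, one_mul, mulVec_apply]

lemma TrA_col_le (i : Fin 99) : TrA i z ≤ 2 := by
  rcases Nat.eq_zero_or_pos (i : ℕ) with h0 | h0
  · rw [(Fin.ext h0 : i = z), TrA_self, zcast]; norm_num
  · rw [TrA_gt (show (z:ℕ) < i from by show 0 < (i:ℕ); omega), zcast]; norm_num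

lemma TrA_row_ge (j : Fin 99) : 2 ≤ TrA z j := by
  rcases Nat.eq_zero_or_pos (j : ℕ) with h0 | h0
  · rw [(Fin.ext h0 : j = z), TrA_self, zcast]; norm_num
  · rw [TrA_lt (show (z:ℕ) < j from by show 0 < (j:ℕ); omega), zcast]; norm_num

lemma TrB_col_ge (i : Fin 99) : 2 ≤ TrB i z := TrA_row_ge i

lemma TrB_row_le (j : Fin 99) : TrB z j ≤ 2 := TrA_col_le j

lemma payA_le {x : Fin 99 → ℝ} (hx : x ∈ Simp 99) : pay TrA x trdTwo ≤ 2 := by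
  obtain ⟨hx0, hx1⟩ := hx
  rw [pay_two_right]
  calc ∑ i, x i * TrA i z ≤ ∑ i, x i * 2 :=
        Finset.sum_le_sum (fun i _ => mul_le_mul_of_nonneg_left (TrA_col_le i) (hx0 i))
    _ = 2 := by rw [← Finset.sum_mul, hx1, one_mul]

lemma payB_ge {x : Fin 99 → ℝ} (hx : x ∈ Simp 99) : 2 ≤ pay TrB x trdTwo := by
  obtain ⟨hx0, hx1⟩ := hx
  rw [pay_two_right]
  calc (2:ℝ) = ∑ i, x i * 2 := by rw [← Finset.sum_mul, hx1, one_mul]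
    _ ≤ ∑ i, x i * TrB i z :=
        Finset.sum_le_sum (fun i _ => mul_le_mul_of_nonneg_left (TrB_col_ge i) (hx0 i))

lemma payA_ge {y : Fin 99 → ℝ} (hy : y ∈ Simp 99) : 2 ≤ pay TrA trdTwo y := by
  obtain ⟨hy0, hy1⟩ := hy
  rw [pay_two_left]
  calc (2:ℝ) = ∑ j, 2 * y j := by rw [← Finset.mul_sum, hy1, mul_one]
    _ ≤ ∑ j, TrA z j * y j :=
        Finset.sum_le_sum (fun j _ => mul_le_mul_of_nonneg_right (TrA_row_ge j) (hy0 j))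

lemma payB_le {y : Fin 99 → ℝ} (hy : y ∈ Simp 99) : pay TrB trdTwo y ≤ 2 := by
  obtain ⟨hy0, hy1⟩ := hy
  rw [pay_two_left]
  calc ∑ j, TrB z j * y j ≤ ∑ j, 2 * y j :=
        Finset.sum_le_sum (fun j _ => mul_le_mul_of_nonneg_right (TrB_row_le j) (hy0 j))
    _ = 2 := by rw [← Finset.mul_sum, hy1, mul_one]

lemma payA_two : pay TrA trdTwo trdTwo = 2 := by
  rw [pay_two_right]
  rw [trdTwo_def]
  simp only [Pi.single_apply, ite_mul, one_mul, zero_mul]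
  rw [Finset.sum_ite_eq' Finset.univ z (fun i => TrA i z)]
  simp only [Finset.mem_univ, if_true]
  rw [TrA_self, zcast]; norm_num

lemma payB_two : pay TrB trdTwo trdTwo = 2 := by
  rw [pay_two_right]
  rw [trdTwo_def]
  simp only [Pi.single_apply, ite_mul, one_mul, zero_mul]
  rw [Finset.sum_ite_eq' Finset.univ z (fun i => TrB i z)]
  simp only [Finset.mem_univ, if_true]
  show TrA z z = 2
  rw [TrA_self, zcast]; norm_num

end TrdAux

/-- the Traveler's Dilemma is almost strictly competitive: `(2,2)` is
its unique (mixed) Nash equilibrium, with payoffs `α = β = 2`; `(2,2)` is a saddle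
point; and every twisted equilibrium (Nash equilibrium of the game with payoffs
`(−β, −α)`) also yields payoffs `α = β = 2`. -/
theorem stmt19 :
    isNE TrA TrB trdTwo trdTwo ∧
    (∀ x y : Fin 99 → ℝ, isNE TrA TrB x y → x = trdTwo ∧ y = trdTwo) ∧
    pay TrA trdTwo trdTwo = 2 ∧ pay TrB trdTwo trdTwo = 2 ∧
    (∀ x ∈ Simp 99,
      pay TrA x trdTwo ≤ pay TrA trdTwo trdTwo ∧
      pay TrB trdTwo trdTwo ≤ pay TrB x trdTwo) ∧
    (∀ y ∈ Simp 99,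
      pay TrA trdTwo trdTwo ≤ pay TrA trdTwo y ∧
      pay TrB trdTwo y ≤ pay TrB trdTwo trdTwo) ∧
    (∀ x y : Fin 99 → ℝ, isNE (-TrB) (-TrA) x y →
      pay TrA x y = 2 ∧ pay TrB x y = 2) := by
  refine ⟨?_, ?_, TrdAux.payA_two, TrdAux.payB_two, ?_, ?_, ?_⟩
  · exact ⟨TrdAux.two_mem, TrdAux.two_mem,
      fun x' hx' => by rw [TrdAux.payA_two]; exact TrdAux.payA_le hx',
      fun y' hy' => by rw [TrdAux.payB_two]; exact TrdAux.payB_le hy'⟩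
  · intro x y h
    obtain ⟨hcx, hcy⟩ := TrdAux.ne_conds h
    exact TrdAux.ne_unique h.1 h.2.1 hcx hcy
  · intro x hx
    rw [TrdAux.payA_two, TrdAux.payB_two]
    exact ⟨TrdAux.payA_le hx, TrdAux.payB_ge hx⟩
  · intro y hy
    rw [TrdAux.payA_two, TrdAux.payB_two]
    exact ⟨TrdAux.payA_ge hy, TrdAux.payB_le hy⟩
  · intro x y h
    obtain ⟨rfl, rfl⟩ := TrdAux.twisted_unique h
    exact ⟨TrdAux.payA_two, TrdAux.payB_two⟩
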